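/- Let ε ∈ (0, 1/2], t ≥ 1, d even, and X = ε·X' with X' diagonal having entries ±1 as above. Suppose for each i < t and each possible measurement outcome x_i we are given a trace-one PSD Hermitian matrix M̂_i (possibly depending on earlier outcomes), and define g^U_i = ⟨M̂_i, U†XU⟩ for U ∈ U(d). If E_{U~Haar}[(g^U_i)²] ≤ Cε²/d for all i, then E_{U~Haar}[∏_{i=1}^{t-1}(1 + g^U_i)] ≥ (1 − 2Cε²/d)^{t-1}. -/

import Mathlib

open MeasureTheory Matrix ComplexOrder

/-- `U† X U` for a unitary `U`. -/
noncomputable def conjAct (d : ℕ) (X : Matrix (Fin d) (Fin d) ℂ)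
    (U : Matrix.unitaryGroup (Fin d) ℂ) : Matrix (Fin d) (Fin d) ℂ :=
  (U : Matrix (Fin d) (Fin d) ℂ)ᴴ * X * (U : Matrix (Fin d) (Fin d) ℂ)

lemma traceNonneg {n : Type*} [Fintype n] [DecidableEq n] {P : Matrix n n ℂ}
    (hP : P.PosSemidef) : 0 ≤ P.trace := by
  rw [Matrix.trace]
  apply Finset.sum_nonneg
  intro i _
  have := hP.dotProduct_mulVec_nonneg (Pi.single i 1)
  simpa [Matrix.mulVec_single, dotProduct, Pi.single_apply] using this

open scoped MatrixOrder in
lemma traceMulNonneg {n : Type*} [Fintype n] [DecidableEq n] {A B : Matrix n n ℂ}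
    (hA : A.PosSemidef) (hB : B.PosSemidef) : 0 ≤ (A*B).trace := by
  obtain ⟨Q, hQ, -, hQA⟩ := CFC.exists_sqrt_of_isSelfAdjoint_of_quasispectrumRestricts
    hA.isHermitian (QuasispectrumRestricts.nnreal_of_nonneg hA.nonneg)
  have h := hB.conjTranspose_mul_mul_same Q
  rw [show Qᴴ = Q from hQ.star_eq] at h
  have e : (Q * B * Q).trace = (A*B).trace := by
    rw [Matrix.trace_mul_cycle, hQA]
  rw [← e]
  exact traceNonneg h

lemma psdSmul {n : Type*} [Fintype n] [DecidableEq n] {A : Matrix n n ℂ} (hA : A.PosSemidef)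
    {c : ℝ} (hc : 0 ≤ c) : ((c:ℂ) • A).PosSemidef := by
  refine .of_dotProduct_mulVec_nonneg ?_ ?_
  · unfold Matrix.IsHermitian
    rw [Matrix.conjTranspose_smul, hA.1.eq]
    congr 1
    simp [Complex.ext_iff]
  · intro x
    rw [Matrix.smul_mulVec, dotProduct_smul]
    exact mul_nonneg (by simpa using hc) (hA.dotProduct_mulVec_nonneg x)

lemma gBound (d : ℕ) (ε : ℝ) (hε0 : 0 < ε)
    (Mi : Matrix (Fin d) (Fin d) ℂ) (hpsd : Mi.PosSemidef) (htr : Mi.trace = 1)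
    (X : Matrix (Fin d) (Fin d) ℂ)
    (hX : X = Matrix.diagonal fun i : Fin d => if (i : ℕ) < d / 2 then (ε : ℂ) else -(ε : ℂ))
    (U : Matrix.unitaryGroup (Fin d) ℂ) :
    |(Matrix.trace (Mi * conjAct d X U)).re| ≤ ε := by
  set v : Fin d → ℂ := fun i => if (i : ℕ) < d / 2 then (1:ℂ) else -1 with hv
  set D : Matrix (Fin d) (Fin d) ℂ := Matrix.diagonal v with hDdef
  have hXD : X = (ε:ℂ) • D := by
    rw [hX, hDdef]
    ext i j
    by_cases hij : i = j
    · subst hij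
      by_cases h : (i:ℕ) < d / 2 <;>
        simp [Matrix.diagonal_apply_eq, Matrix.smul_apply, hv, h]
    · simp [Matrix.diagonal_apply_ne _ hij, Matrix.smul_apply, hv]
  set Um : Matrix (Fin d) (Fin d) ℂ := (U : Matrix (Fin d) (Fin d) ℂ) with hUm
  have hUU : Um * Umᴴ = 1 := by rw [← Matrix.star_eq_conjTranspose]; exact U.2.2
  set W : Matrix (Fin d) (Fin d) ℂ := Umᴴ * D * Um with hW
  have hDH : Dᴴ = D := by
    rw [hDdef, Matrix.diagonal_conjTranspose]
    ext i j
    by_cases hij : i = j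
    · subst hij
      by_cases h : (i:ℕ) < d / 2 <;> simp [Matrix.diagonal_apply_eq, hv, h]
    · simp [Matrix.diagonal_apply_ne _ hij]
  have hDD : D * D = 1 := by
    rw [hDdef, Matrix.diagonal_mul_diagonal, ← Matrix.diagonal_one]
    ext i j
    by_cases hij : i = j
    · subst hij
      by_cases h : (i:ℕ) < d / 2 <;> simp [Matrix.diagonal_apply_eq, hv, h]
    · simp [Matrix.diagonal_apply_ne _ hij]
  have hWH : Wᴴ = W := by
    rw [hW]
    simp only [Matrix.conjTranspose_mul, Matrix.conjTranspose_conjTranspose, hDH]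
    rw [Matrix.mul_assoc]
  have hW2 : W * W = 1 := by
    have e1 : W * W = Umᴴ * (D * ((Um * Umᴴ) * (D * Um))) := by
      rw [hW]; simp only [Matrix.mul_assoc]
    rw [e1, hUU, one_mul, ← Matrix.mul_assoc D D Um, hDD, one_mul,
      ← Matrix.star_eq_conjTranspose]
    exact U.2.1
  have hplus : ((1:Matrix (Fin d) (Fin d) ℂ) + W).PosSemidef := by
    have h2 : ((1:Matrix (Fin d) (Fin d) ℂ) + W)ᴴ * (1 + W) = (2:ℂ) • (1 + W) := by
      rw [Matrix.conjTranspose_add, Matrix.conjTranspose_one, hWH]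
      simp only [add_mul, mul_add, one_mul, mul_one, hW2]
      module
    have h3 : (1:Matrix (Fin d) (Fin d) ℂ) + W = (((1:ℝ)/2 : ℝ):ℂ) • ((1 + W)ᴴ * (1 + W)) := by
      rw [h2, smul_smul]
      norm_num
    rw [h3]
    exact psdSmul (Matrix.posSemidef_conjTranspose_mul_self _) (by norm_num)
  have hminus : ((1:Matrix (Fin d) (Fin d) ℂ) - W).PosSemidef := by
    have h2 : ((1:Matrix (Fin d) (Fin d) ℂ) - W)ᴴ * (1 - W) = (2:ℂ) • (1 - W) := by
      rw [Matrix.conjTranspose_sub, Matrix.conjTranspose_one, hWH]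
      simp only [sub_mul, mul_sub, one_mul, mul_one, hW2]
      module
    have h3 : (1:Matrix (Fin d) (Fin d) ℂ) - W = (((1:ℝ)/2 : ℝ):ℂ) • ((1 - W)ᴴ * (1 - W)) := by
      rw [h2, smul_smul]
      norm_num
    rw [h3]
    exact psdSmul (Matrix.posSemidef_conjTranspose_mul_self _) (by norm_num)
  have ha : 0 ≤ (Mi * (1 + W)).trace := traceMulNonneg hpsd hplus
  have hb : 0 ≤ (Mi * (1 - W)).trace := traceMulNonneg hpsd hminus
  have ha' : 0 ≤ ((Mi * (1 + W)).trace).re := (Complex.nonneg_iff.mp ha).1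
  have hb' : 0 ≤ ((Mi * (1 - W)).trace).re := (Complex.nonneg_iff.mp hb).1
  have hexp1 : (Mi * (1 + W)).trace = Mi.trace + (Mi * W).trace := by
    rw [mul_add, mul_one, Matrix.trace_add]
  have hexp2 : (Mi * (1 - W)).trace = Mi.trace - (Mi * W).trace := by
    rw [mul_sub, mul_one, Matrix.trace_sub]
  have hr : |((Mi * W).trace).re| ≤ 1 := by
    rw [hexp1, htr] at ha'
    rw [hexp2, htr] at hb'
    simp only [Complex.add_re, Complex.sub_re, Complex.one_re] at ha' hb'
    rw [abs_le]
    constructor <;> linarith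
  have hgW : (Matrix.trace (Mi * conjAct d X U)).re = ε * ((Mi * W).trace).re := by
    have : conjAct d X U = (ε:ℂ) • W := by
      rw [conjAct, hXD, hW, hUm]
      rw [Matrix.mul_smul, Matrix.smul_mul]
    rw [this, Matrix.mul_smul, Matrix.trace_smul, smul_eq_mul, Complex.re_ofReal_mul]
  rw [hgW, abs_mul, abs_of_pos hε0]
  calc ε * |((Mi * W).trace).re| ≤ ε * 1 := mul_le_mul_of_nonneg_left hr hε0.le
    _ = ε := mul_one ε

theorem PEquiv.equiv_toPEquiv_toMatrix {n : Type*} [DecidableEq n] (σ : Equiv n n) (i j : n) :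
    σ.toPEquiv.toMatrix i j = (1 : Matrix n n ℂ) (σ i) j := by
  rw [PEquiv.toMatrix_toPEquiv_apply, Pi.single_apply, Matrix.one_apply]
  by_cases h : σ i = j
  · simp [h]
  · simp [h, Ne.symm h]

lemma flipMat (d : ℕ) (hd : 2 ∣ d) (hd2 : 2 ≤ d) (ε : ℝ) :
    ∃ S : Matrix.unitaryGroup (Fin d) ℂ,
      (S : Matrix (Fin d) (Fin d) ℂ)ᴴ *
        (Matrix.diagonal fun i : Fin d => if (i : ℕ) < d / 2 then (ε : ℂ) else -(ε : ℂ)) *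
        (S : Matrix (Fin d) (Fin d) ℂ)
      = -(Matrix.diagonal fun i : Fin d => if (i : ℕ) < d / 2 then (ε : ℂ) else -(ε : ℂ)) := by
  haveI : NeZero d := ⟨by omega⟩
  set v : Fin d → ℂ := fun i => if (i : ℕ) < d / 2 then (ε : ℂ) else -(ε : ℂ) with hv
  set c : Fin d := ⟨d / 2, by omega⟩ with hc
  set σ : Equiv.Perm (Fin d) := Equiv.addRight c with hσ
  have hσval : ∀ i : Fin d, ((σ i : Fin d) : ℕ) = ((i : ℕ) + d / 2) % d := by
    intro i
    simp [hσ, hc, Fin.add_def]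
  have hvσ : ∀ i, v (σ i) = - v i := by
    intro i
    have hval := hσval i
    by_cases h : (i:ℕ) < d / 2
    · have h2 : ((i:ℕ) + d / 2) % d = (i:ℕ) + d / 2 := by
        apply Nat.mod_eq_of_lt; omega
      have : ¬ ((σ i : Fin d) : ℕ) < d / 2 := by rw [hval, h2]; omega
      simp [hv, this, h]
    · have hi : (i:ℕ) < d := i.2
      have h2 : ((i:ℕ) + d / 2) % d = (i:ℕ) + d / 2 - d := by
        rw [Nat.mod_eq_sub_mod (by omega), Nat.mod_eq_of_lt (by omega)]
      have : ((σ i : Fin d) : ℕ) < d / 2 := by rw [hval, h2]; omega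
      simp [hv, this, h]
  have hvσ' : ∀ i, v (σ.symm i) = - v i := by
    intro i
    have h := hvσ (σ.symm i)
    rw [Equiv.apply_symm_apply] at h
    rw [h, neg_neg]
  set S : Matrix (Fin d) (Fin d) ℂ := σ.toPEquiv.toMatrix with hS
  have hSH : Sᴴ = σ.symm.toPEquiv.toMatrix := by
    ext i j
    rw [Matrix.conjTranspose_apply, hS, PEquiv.equiv_toPEquiv_toMatrix,
      PEquiv.equiv_toPEquiv_toMatrix, Matrix.one_apply, Matrix.one_apply]
    have : σ j = i ↔ σ.symm i = j := by
      constructor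
      · intro h; rw [← h, Equiv.symm_apply_apply]
      · intro h; rw [← h, Equiv.apply_symm_apply]
    split_ifs with h1 h2 h2 <;> simp_all
  have hmemS : S ∈ Matrix.unitaryGroup (Fin d) ℂ := by
    rw [Matrix.mem_unitaryGroup_iff', Matrix.star_eq_conjTranspose, hSH, hS,
      PEquiv.toMatrix_toPEquiv_mul]
    ext i j
    rw [Matrix.submatrix_apply, PEquiv.equiv_toPEquiv_toMatrix, id_eq, Equiv.apply_symm_apply]
  refine ⟨⟨S, hmemS⟩, ?_⟩
  show Sᴴ * Matrix.diagonal v * S = -Matrix.diagonal v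
  rw [hSH, PEquiv.toMatrix_toPEquiv_mul, hS, PEquiv.mul_toMatrix_toPEquiv,
    Matrix.submatrix_submatrix]
  have h1 : (Matrix.diagonal v).submatrix (σ.symm ∘ id) (id ∘ σ.symm)
      = Matrix.diagonal (v ∘ σ.symm) := by
    have := Matrix.submatrix_diagonal_equiv v σ.symm
    simpa using this
  rw [h1]
  have h2 : v ∘ ⇑(Equiv.symm σ) = fun i => -v i := funext fun i => hvσ' i
  rw [h2, Matrix.diagonal_neg]

lemma logAbsBound {x : ℝ} (h : |x| ≤ 1/2) : |Real.log (1 + x)| ≤ Real.log 2 := by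
  rw [abs_le] at h ⊢
  have h1 : (1:ℝ)/2 ≤ 1 + x := by linarith
  have h2 : 1 + x ≤ 2 := by linarith
  constructor
  · have := Real.log_le_log (by norm_num) h1
    rw [Real.log_div (by norm_num) (by norm_num)] at this
    simpa using this
  · exact Real.log_le_log (by linarith) h2

lemma logOneSub {x : ℝ} (h0 : 0 ≤ x) (h1 : x ≤ 1/4) : -2*x ≤ Real.log (1 - x) := by
  have hpos : (0:ℝ) < 1 - x := by linarith
  have he : Real.exp (-2*x) ≤ 1 - x := by
    have h2 : 1 + 2*x ≤ Real.exp (2*x) := by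
      have := Real.add_one_le_exp (2*x)
      linarith
    have h3 : Real.exp (-2*x) = (Real.exp (2*x))⁻¹ := by
      rw [← Real.exp_neg]; ring_nf
    rw [h3]
    have h4 : (Real.exp (2*x))⁻¹ ≤ (1 + 2*x)⁻¹ := inv_anti₀ (by linarith) h2
    have h5 : (1 + 2*x)⁻¹ ≤ 1 - x := by
      rw [inv_le_iff_one_le_mul₀ (by linarith)]
      nlinarith
    linarith
  calc -2*x = Real.log (Real.exp (-2*x)) := (Real.log_exp _).symm
    _ ≤ Real.log (1 - x) := Real.log_le_log (Real.exp_pos _) he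

theorem stmt14 (d t : ℕ) (hd : 2 ∣ d) (hd2 : 2 ≤ d) (ht : 1 ≤ t)
    (ε C : ℝ) (hε0 : 0 < ε) (hε1 : ε ≤ 1 / 2) (hC : 0 ≤ C) (hCd : 2 * C * ε ^ 2 ≤ d)
    [MeasurableSpace (Matrix.unitaryGroup (Fin d) ℂ)]
    [BorelSpace (Matrix.unitaryGroup (Fin d) ℂ)]
    (μ : Measure (Matrix.unitaryGroup (Fin d) ℂ)) [IsProbabilityMeasure μ]
    (hinv : ∀ V : Matrix.unitaryGroup (Fin d) ℂ, μ.map (fun U => V * U) = μ)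
    (X : Matrix (Fin d) (Fin d) ℂ)
    (hX : X = Matrix.diagonal fun i : Fin d => if (i : ℕ) < d / 2 then (ε : ℂ) else -(ε : ℂ))
    (M : Fin (t - 1) → Matrix (Fin d) (Fin d) ℂ)
    (hM : ∀ i, (M i).PosSemidef ∧ (M i).trace = 1)
    (hg2 : ∀ i, ∫ U, ((Matrix.trace (M i * conjAct d X U)).re) ^ 2 ∂μ ≤ C * ε ^ 2 / d) :
    ∫ U, ∏ i, (1 + (Matrix.trace (M i * conjAct d X U)).re) ∂μ
      ≥ (1 - 2 * C * ε ^ 2 / d) ^ (t - 1) := by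
  have hdpos : (0:ℝ) < d := by positivity
  set g : Fin (t-1) → Matrix.unitaryGroup (Fin d) ℂ → ℝ :=
    fun i U => (Matrix.trace (M i * conjAct d X U)).re with hg
  -- basic bounds
  have hgb : ∀ i U, |g i U| ≤ 1/2 := fun i U =>
    le_trans (gBound d ε hε0 (M i) (hM i).1 (hM i).2 X hX U) hε1
  have hgpos : ∀ i U, (0:ℝ) < 1 + g i U := by
    intro i U
    have := (abs_le.mp (hgb i U)).1
    linarith
  have hgneg : ∀ i U, (0:ℝ) < 1 - g i U := by
    intro i U
    have := (abs_le.mp (hgb i U)).2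
    linarith
  -- continuity / measurability
  have hgc : ∀ i, Continuous (g i) := by
    intro i
    apply Complex.continuous_re.comp
    apply Continuous.matrix_trace
    apply Continuous.matrix_mul continuous_const
    exact ((continuous_subtype_val.matrix_conjTranspose.matrix_mul
      continuous_const).matrix_mul continuous_subtype_val)
  set L : Fin (t-1) → Matrix.unitaryGroup (Fin d) ℂ → ℝ :=
    fun i U => Real.log (1 + g i U) with hL
  set L' : Fin (t-1) → Matrix.unitaryGroup (Fin d) ℂ → ℝ :=
    fun i U => Real.log (1 - g i U) with hL'
  have hLm : ∀ i, Measurable (L i) := fun i =>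
    Real.measurable_log.comp (measurable_const.add (hgc i).measurable)
  have hL'm : ∀ i, Measurable (L' i) := fun i =>
    Real.measurable_log.comp (measurable_const.sub (hgc i).measurable)
  have hLbd : ∀ i U, |L i U| ≤ Real.log 2 := fun i U => logAbsBound (hgb i U)
  have hL'bd : ∀ i U, |L' i U| ≤ Real.log 2 := by
    intro i U
    show |Real.log (1 - g i U)| ≤ Real.log 2
    have e : (1 : ℝ) - g i U = 1 + (- g i U) := by ring
    rw [e]
    exact logAbsBound (by rw [abs_neg]; exact hgb i U)
  have hLint : ∀ i, Integrable (L i) μ := by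
    intro i
    exact Integrable.mono' (integrable_const (Real.log 2))
      (hLm i).aestronglyMeasurable
      (Filter.Eventually.of_forall fun U => hLbd i U)
  have hL'int : ∀ i, Integrable (L' i) μ := by
    intro i
    exact Integrable.mono' (integrable_const (Real.log 2))
      (hL'm i).aestronglyMeasurable
      (Filter.Eventually.of_forall fun U => hL'bd i U)
  -- symmetry
  obtain ⟨S, hSX0⟩ := flipMat d hd hd2 ε
  have hSX : (S : Matrix (Fin d) (Fin d) ℂ)ᴴ * X * (S : Matrix (Fin d) (Fin d) ℂ) = -X := by
    rw [hX]; exact hSX0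
  have hconj : ∀ U, conjAct d X (S * U) = - conjAct d X U := by
    intro U
    have coe : ((S * U : Matrix.unitaryGroup (Fin d) ℂ) : Matrix (Fin d) (Fin d) ℂ)
        = (S : Matrix (Fin d) (Fin d) ℂ) * (U : Matrix (Fin d) (Fin d) ℂ) := rfl
    unfold conjAct
    rw [coe]
    have e1 : ((S : Matrix (Fin d) (Fin d) ℂ) * (U : Matrix (Fin d) (Fin d) ℂ))ᴴ * X *
          ((S : Matrix (Fin d) (Fin d) ℂ) * (U : Matrix (Fin d) (Fin d) ℂ))
        = (U : Matrix (Fin d) (Fin d) ℂ)ᴴ *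
          (((S : Matrix (Fin d) (Fin d) ℂ)ᴴ * X * (S : Matrix (Fin d) (Fin d) ℂ)) *
            (U : Matrix (Fin d) (Fin d) ℂ)) := by
      rw [Matrix.conjTranspose_mul]
      simp only [Matrix.mul_assoc]
    rw [e1, hSX]
    simp only [Matrix.neg_mul, Matrix.mul_neg, Matrix.mul_assoc]
  have hgflip : ∀ i U, g i (S * U) = - g i U := by
    intro i U
    rw [hg]
    simp only
    rw [hconj U, Matrix.mul_neg, Matrix.trace_neg, Complex.neg_re]
  have hmapmeas : Measurable (fun U : Matrix.unitaryGroup (Fin d) ℂ => S * U) := by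
    apply Continuous.measurable
    exact Continuous.subtype_mk (continuous_const.matrix_mul continuous_subtype_val) _
  have key : ∀ h : Matrix.unitaryGroup (Fin d) ℂ → ℝ, Measurable h →
      ∫ U, h U ∂μ = ∫ U, h (S * U) ∂μ := by
    intro h hh
    conv_lhs => rw [← hinv S]
    rw [integral_map hmapmeas.aemeasurable]
    rw [hinv S]
    exact hh.aestronglyMeasurable
  have hIflip : ∀ i, ∫ U, L i U ∂μ = ∫ U, L' i U ∂μ := by
    intro i
    rw [key (L i) (hLm i)]
    congr 1
    funext U
    rw [hL, hL']
    simp only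
    rw [hgflip i U]
    ring_nf
  -- per-index integral bound
  have hg2int : ∀ i, Integrable (fun U => g i U ^ 2) μ := by
    intro i
    refine Integrable.mono' (integrable_const ((1:ℝ)/4))
      (((hgc i).pow 2).measurable).aestronglyMeasurable
      (Filter.Eventually.of_forall fun U => ?_)
    have h := hgb i U
    rw [Real.norm_eq_abs, abs_pow]
    nlinarith [abs_nonneg (g i U)]
  have hLi : ∀ i, -(C * ε^2 / d) ≤ ∫ U, L i U ∂μ := by
    intro i
    have hsum : ∫ U, (L i U + L' i U) ∂μ = (∫ U, L i U ∂μ) + ∫ U, L' i U ∂μ :=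
      integral_add (hLint i) (hL'int i)
    have hptwise : ∀ U, -2 * g i U ^ 2 ≤ L i U + L' i U := by
      intro U
      have hmul : (1 + g i U) * (1 - g i U) = 1 - g i U ^ 2 := by ring
      have hlog : L i U + L' i U = Real.log (1 - g i U ^ 2) := by
        rw [hL, hL']
        simp only
        rw [← Real.log_mul (ne_of_gt (hgpos i U)) (ne_of_gt (hgneg i U)), hmul]
      rw [hlog]
      apply logOneSub (sq_nonneg _)
      have h := hgb i U
      nlinarith [sq_abs (g i U), abs_nonneg (g i U)]
    have hmono : ∫ U, (-2 : ℝ) * g i U ^ 2 ∂μ ≤ ∫ U, (L i U + L' i U) ∂μ := by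
      apply integral_mono ((hg2int i).const_mul (-2)) ((hLint i).add (hL'int i))
      exact fun U => hptwise U
    have hleft : ∫ U, (-2 : ℝ) * g i U ^ 2 ∂μ = -2 * ∫ U, g i U ^ 2 ∂μ := by
      rw [integral_const_mul]
    have hg2i := hg2 i
    have : -2 * (C * ε^2 / d) ≤ (∫ U, L i U ∂μ) + ∫ U, L' i U ∂μ := by
      rw [← hsum]
      calc -2 * (C * ε^2 / d) ≤ -2 * ∫ U, g i U ^ 2 ∂μ := by nlinarith
        _ = ∫ U, (-2 : ℝ) * g i U ^ 2 ∂μ := hleft.symm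
        _ ≤ _ := hmono
    rw [← hIflip i] at this
    linarith
  -- Jensen
  set F : Matrix.unitaryGroup (Fin d) ℂ → ℝ := fun U => ∑ i, L i U with hF
  have hFint : Integrable F μ := integrable_finset_sum _ fun i _ => hLint i
  have hFm : Measurable F := Finset.measurable_sum _ fun i _ => hLm i
  have hFbd : ∀ U, F U ≤ (t-1 : ℕ) * Real.log 2 := by
    intro U
    rw [hF]
    calc ∑ i, L i U ≤ ∑ _i : Fin (t-1), Real.log 2 :=
          Finset.sum_le_sum fun i _ => (abs_le.mp (hLbd i U)).2
      _ = (t-1 : ℕ) * Real.log 2 := by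
          rw [Finset.sum_const, Finset.card_univ, Fintype.card_fin, nsmul_eq_mul]
  have hexpFint : Integrable (Real.exp ∘ F) μ := by
    refine Integrable.mono' (integrable_const (Real.exp ((t-1 : ℕ) * Real.log 2)))
      (Real.measurable_exp.comp hFm).aestronglyMeasurable
      (Filter.Eventually.of_forall fun U => ?_)
    rw [Function.comp_apply, Real.norm_eq_abs, abs_of_pos (Real.exp_pos _)]
    exact Real.exp_le_exp.mpr (hFbd U)
  have hJensen : Real.exp (∫ U, F U ∂μ) ≤ ∫ U, Real.exp (F U) ∂μ := by
    have := (convexOn_exp).map_integral_le (Real.continuous_exp.continuousOn)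
      isClosed_univ (Filter.Eventually.of_forall fun U => Set.mem_univ (F U)) hFint hexpFint
    exact this
  -- assemble
  have hFsum : ∫ U, F U ∂μ = ∑ i, ∫ U, L i U ∂μ := integral_finset_sum _ fun i _ => hLint i
  have hFlow : (t-1 : ℕ) * (-(C * ε^2 / d)) ≤ ∫ U, F U ∂μ := by
    rw [hFsum]
    calc ((t-1 : ℕ) : ℝ) * (-(C * ε^2 / d)) = ∑ _i : Fin (t-1), -(C * ε^2 / d) := by
          rw [Finset.sum_const, Finset.card_univ, Fintype.card_fin, nsmul_eq_mul]
      _ ≤ ∑ i, ∫ U, L i U ∂μ := Finset.sum_le_sum fun i _ => hLi i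
  have hprodexp : ∫ U, ∏ i, (1 + g i U) ∂μ = ∫ U, Real.exp (F U) ∂μ := by
    congr 1
    funext U
    rw [hF, Real.exp_sum]
    exact Finset.prod_congr rfl fun i _ => (Real.exp_log (hgpos i U)).symm
  have hx0 : 0 ≤ C * ε^2 / d := by positivity
  have hbase0 : 0 ≤ 1 - 2 * C * ε ^ 2 / d := by
    have : 2 * C * ε ^ 2 / d ≤ 1 := by
      rw [div_le_one hdpos]
      exact hCd
    linarith
  have hbase : 1 - 2 * C * ε ^ 2 / d ≤ Real.exp (-(C * ε^2 / d)) := by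
    have := Real.add_one_le_exp (-(C * ε^2 / d))
    have he : 2 * C * ε ^ 2 / d = 2 * (C * ε^2 / d) := by ring
    rw [he]
    linarith
  show _ ≥ _
  calc (1 - 2 * C * ε ^ 2 / d) ^ (t - 1)
      ≤ (Real.exp (-(C * ε^2 / d))) ^ (t-1) := pow_le_pow_left₀ hbase0 hbase _
    _ = Real.exp ((t-1 : ℕ) * (-(C * ε^2 / d))) := by
        rw [← Real.exp_nat_mul]
    _ ≤ Real.exp (∫ U, F U ∂μ) := Real.exp_le_exp.mpr hFlow
    _ ≤ ∫ U, Real.exp (F U) ∂μ := hJensen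
    _ = ∫ U, ∏ i, (1 + g i U) ∂μ := hprodexp.symm
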